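/- Let z = a + bi with a ≥ 0, b ∈ ℝ, δt > 0 and 1/2 ≤ ι ≤ 1. Then (1 − (1−ι)δt·a)² + (1−ι)²δt²b² ≤ (1 + ιδt·a)² + ι²δt²b², i.e., |1 − (1−ι)δt z| ≤ |1 + ιδt z|. -/

import Mathlib

theorem key_stability_inequality (a b δt ι : ℝ) (ha : a ≥ 0) (hδt : δt > 0)
    (hι1 : (1:ℝ)/2 ≤ ι) (hι2 : ι ≤ 1) :
    (1 - (1 - ι) * δt * a) ^ 2 + (1 - ι) ^ 2 * δt ^ 2 * b ^ 2 ≤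
      (1 + ι * δt * a) ^ 2 + ι ^ 2 * δt ^ 2 * b ^ 2 ∧
    ‖(1 - ((1 - ι) * δt : ℝ) * ((a : ℝ) + (b : ℝ) * Complex.I) : ℂ)‖ ≤
      ‖(1 + (ι * δt : ℝ) * ((a : ℝ) + (b : ℝ) * Complex.I) : ℂ)‖ := by
  have key : (1 - (1 - ι) * δt * a) ^ 2 + (1 - ι) ^ 2 * δt ^ 2 * b ^ 2 ≤
      (1 + ι * δt * a) ^ 2 + ι ^ 2 * δt ^ 2 * b ^ 2 := by
    nlinarith [sq_nonneg b, sq_nonneg δt, mul_pos hδt hδt, sq_nonneg (δt*b),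
      mul_nonneg (mul_nonneg hδt.le ha) (sub_nonneg.2 hι1),
      mul_nonneg (sq_nonneg (δt*b)) (sub_nonneg.2 hι1),
      mul_nonneg (mul_nonneg hδt.le ha) (mul_nonneg hδt.le ha)]
  refine ⟨key, ?_⟩
  rw [Complex.norm_def, Complex.norm_def]
  apply Real.sqrt_le_sqrt
  rw [Complex.normSq_apply, Complex.normSq_apply]
  push_cast
  simp [Complex.add_re, Complex.add_im, Complex.sub_re, Complex.sub_im,
    Complex.mul_re, Complex.mul_im]
  nlinarith [key]
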